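/- Let L, L′, L″ be complex Lie algebras admitting bases e₁,…,e₅, f₁,…,f₅, g₁,…,g₅ respectively, whose only nonzero brackets among basis vectors (up to antisymmetry) are: in L: [e₂,e₄]=e₁, [e₃,e₄]=e₂, [e₃,e₅]=e₁; in L′: [f₃,f₄]=f₂, [f₁,f₅]=f₂, [f₃,f₅]=f₁+f₄; in L″: [g₃,g₄]=g₂, [g₁,g₅]=g₂, [g₃,g₅]=g₁. Then L, L′ and L″ are pairwise isomorphic as Lie algebras over ℂ. -/

import Mathlib

/-- `Realizes L c` means that the complex Lie algebra `L` admits a basis `e₁, …, e₅`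
(indexed by `Fin 5`) in which the brackets of basis vectors are given by the
structure constants `c`, i.e. `⁅eᵢ, eⱼ⁆ = ∑ₖ c i j k • eₖ` for all `i < j`,
all brackets of basis vectors being determined by these via antisymmetry. -/
def Realizes (L : Type) [LieRing L] [LieAlgebra ℂ L]
    (c : Fin 5 → Fin 5 → Fin 5 → ℂ) : Prop :=
  ∃ e : Module.Basis (Fin 5) ℂ L, ∀ i j : Fin 5, i < j →
    ⁅e i, e j⁆ = ∑ k, c i j k • e k

/-- The nilpotent pattern `d₅(0:0:0)`: `[e₂,e₄]=e₁`, `[e₃,e₄]=e₂`, `[e₃,e₅]=e₁`. -/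
def patternL : Fin 5 → Fin 5 → Fin 5 → ℂ := fun i j =>
  if i = 1 ∧ j = 3 then ![1, 0, 0, 0, 0]
  else if i = 2 ∧ j = 3 then ![0, 1, 0, 0, 0]
  else if i = 2 ∧ j = 4 then ![1, 0, 0, 0, 0]
  else 0

/-- The nilpotent pattern `d₁₄(0:0)`: `[f₃,f₄]=f₂`, `[f₁,f₅]=f₂`, `[f₃,f₅]=f₁+f₄`. -/
def patternL' : Fin 5 → Fin 5 → Fin 5 → ℂ := fun i j =>
  if i = 2 ∧ j = 3 then ![0, 1, 0, 0, 0]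
  else if i = 0 ∧ j = 4 then ![0, 1, 0, 0, 0]
  else if i = 2 ∧ j = 4 then ![1, 0, 0, 1, 0]
  else 0

/-- The nilpotent pattern `d₁₅(0:0)`: `[g₃,g₄]=g₂`, `[g₁,g₅]=g₂`, `[g₃,g₅]=g₁`. -/
def patternL'' : Fin 5 → Fin 5 → Fin 5 → ℂ := fun i j =>
  if i = 2 ∧ j = 3 then ![0, 1, 0, 0, 0]
  else if i = 0 ∧ j = 4 then ![0, 1, 0, 0, 0]
  else if i = 2 ∧ j = 4 then ![1, 0, 0, 0, 0]
  else 0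

/-- Two complex Lie algebras realizing the same structure constants are isomorphic. -/
lemma Realizes.lieEquiv {L M : Type} [LieRing L] [LieAlgebra ℂ L] [LieRing M] [LieAlgebra ℂ M]
    {c : Fin 5 → Fin 5 → Fin 5 → ℂ} (hL : Realizes L c) (hM : Realizes M c) :
    Nonempty (L ≃ₗ⁅ℂ⁆ M) := by
  obtain ⟨e, he⟩ := hL
  obtain ⟨f, hf⟩ := hM
  let φ : L ≃ₗ[ℂ] M := e.equiv f (Equiv.refl _)
  have hφ : ∀ i, φ (e i) = f i := fun i => e.equiv_apply _ f _
  let B : L →ₗ[ℂ] L →ₗ[ℂ] M := LinearMap.mk₂ ℂ (fun x y => φ ⁅x, y⁆)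
    (fun x y z => by simp [add_lie]) (fun a x y => by simp [smul_lie])
    (fun x y z => by simp [lie_add]) (fun a x y => by simp [lie_smul])
  let B' : L →ₗ[ℂ] L →ₗ[ℂ] M := LinearMap.mk₂ ℂ (fun x y => ⁅φ x, φ y⁆)
    (fun x y z => by simp [add_lie]) (fun a x y => by simp [smul_lie])
    (fun x y z => by simp [lie_add]) (fun a x y => by simp [lie_smul])
  have hBB : B = B' := by
    apply LinearMap.ext_basis e e
    intro i j
    simp only [B, B', LinearMap.mk₂_apply, hφ]
    rcases lt_trichotomy i j with h | h | h
    · rw [he i j h, hf i j h]; simp [hφ]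
    · subst h; simp
    · rw [← lie_skew (e i) (e j), ← lie_skew (f i) (f j), he j i h, hf j i h]
      simp [hφ]
  have key : ∀ x y : L, φ ⁅x, y⁆ = ⁅φ x, φ y⁆ := fun x y =>
    DFunLike.congr_fun (DFunLike.congr_fun hBB x) y
  exact ⟨{ φ with map_lie' := fun {x y} => key x y }⟩

/-- Any algebra realizing `patternL''` also realizes `patternL` (change of basis). -/
lemma realizes_patternL_of_patternL'' {M : Type} [LieRing M] [LieAlgebra ℂ M]
    (h : Realizes M patternL'') : Realizes M patternL := by
  obtain ⟨g, hg⟩ := h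
  have h01 : ⁅g 0, g 1⁆ = 0 := by simpa [patternL'', Fin.sum_univ_five] using hg 0 1 (by decide)
  have h02 : ⁅g 0, g 2⁆ = 0 := by simpa [patternL'', Fin.sum_univ_five] using hg 0 2 (by decide)
  have h03 : ⁅g 0, g 3⁆ = 0 := by simpa [patternL'', Fin.sum_univ_five] using hg 0 3 (by decide)
  have h04 : ⁅g 0, g 4⁆ = g 1 := by simpa [patternL'', Fin.sum_univ_five] using hg 0 4 (by decide)
  have h12 : ⁅g 1, g 2⁆ = 0 := by simpa [patternL'', Fin.sum_univ_five] using hg 1 2 (by decide)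
  have h13 : ⁅g 1, g 3⁆ = 0 := by simpa [patternL'', Fin.sum_univ_five] using hg 1 3 (by decide)
  have h14 : ⁅g 1, g 4⁆ = 0 := by simpa [patternL'', Fin.sum_univ_five] using hg 1 4 (by decide)
  have h23 : ⁅g 2, g 3⁆ = g 1 := by simpa [patternL'', Fin.sum_univ_five] using hg 2 3 (by decide)
  have h24 : ⁅g 2, g 4⁆ = g 0 := by simpa [patternL'', Fin.sum_univ_five] using hg 2 4 (by decide)
  have h34 : ⁅g 3, g 4⁆ = 0 := by simpa [patternL'', Fin.sum_univ_five] using hg 3 4 (by decide)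
  have h10 : ⁅g 1, g 0⁆ = 0 := by rw [← lie_skew, h01, neg_zero]
  have h20 : ⁅g 2, g 0⁆ = 0 := by rw [← lie_skew, h02, neg_zero]
  have h30 : ⁅g 3, g 0⁆ = 0 := by rw [← lie_skew, h03, neg_zero]
  have h40 : ⁅g 4, g 0⁆ = -g 1 := by rw [← lie_skew, h04]
  have h21 : ⁅g 2, g 1⁆ = 0 := by rw [← lie_skew, h12, neg_zero]
  have h31 : ⁅g 3, g 1⁆ = 0 := by rw [← lie_skew, h13, neg_zero]
  have h41 : ⁅g 4, g 1⁆ = 0 := by rw [← lie_skew, h14, neg_zero]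
  have h32 : ⁅g 3, g 2⁆ = -g 1 := by rw [← lie_skew, h23]
  have h42 : ⁅g 4, g 2⁆ = -g 0 := by rw [← lie_skew, h24]
  have h43 : ⁅g 4, g 3⁆ = 0 := by rw [← lie_skew, h34, neg_zero]
  let v : Fin 5 → M := ![g 1, g 0 + g 1, g 2, g 3 + g 4, g 3]
  let w : Fin 5 → M := ![g 1 - g 0, g 0, g 2, g 4, g 3 - g 4]
  let A : M →ₗ[ℂ] M := g.constr ℂ v
  let B : M →ₗ[ℂ] M := g.constr ℂ w
  have hAB : A.comp B = LinearMap.id := by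
    apply g.ext
    intro i
    fin_cases i <;>
      simp [A, B, v, w, Module.Basis.constr_basis, map_sub, map_add]
  have hBA : B.comp A = LinearMap.id := by
    apply g.ext
    intro i
    fin_cases i <;>
      simp [A, B, v, w, Module.Basis.constr_basis, map_sub, map_add]
  let φ : M ≃ₗ[ℂ] M := LinearEquiv.ofLinear A B hAB hBA
  refine ⟨g.map φ, ?_⟩
  have hv : ∀ i, (g.map φ) i = v i := by
    intro i
    simp [φ, Module.Basis.map_apply, A, Module.Basis.constr_basis]
  intro i j hij
  fin_cases i <;> fin_cases j <;>
    first
      | exact absurd hij (by decide)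
      | (simp [hv, v, patternL, Fin.sum_univ_five, lie_add, add_lie,
          h01, h02, h03, h04, h12, h13, h14, h23, h24, h34,
          h10, h20, h30, h40, h21, h31, h41, h32, h42, h43] <;> abel)

/-- Any algebra realizing `patternL'` also realizes `patternL''` (change of basis). -/
lemma realizes_patternL''_of_patternL' {M : Type} [LieRing M] [LieAlgebra ℂ M]
    (h : Realizes M patternL') : Realizes M patternL'' := by
  obtain ⟨f, hf⟩ := h
  have h01 : ⁅f 0, f 1⁆ = 0 := by simpa [patternL', Fin.sum_univ_five] using hf 0 1 (by decide)
  have h02 : ⁅f 0, f 2⁆ = 0 := by simpa [patternL', Fin.sum_univ_five] using hf 0 2 (by decide)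
  have h03 : ⁅f 0, f 3⁆ = 0 := by simpa [patternL', Fin.sum_univ_five] using hf 0 3 (by decide)
  have h04 : ⁅f 0, f 4⁆ = f 1 := by simpa [patternL', Fin.sum_univ_five] using hf 0 4 (by decide)
  have h12 : ⁅f 1, f 2⁆ = 0 := by simpa [patternL', Fin.sum_univ_five] using hf 1 2 (by decide)
  have h13 : ⁅f 1, f 3⁆ = 0 := by simpa [patternL', Fin.sum_univ_five] using hf 1 3 (by decide)
  have h14 : ⁅f 1, f 4⁆ = 0 := by simpa [patternL', Fin.sum_univ_five] using hf 1 4 (by decide)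
  have h23 : ⁅f 2, f 3⁆ = f 1 := by simpa [patternL', Fin.sum_univ_five] using hf 2 3 (by decide)
  have h24 : ⁅f 2, f 4⁆ = f 0 + f 3 := by
    simpa [patternL', Fin.sum_univ_five] using hf 2 4 (by decide)
  have h34 : ⁅f 3, f 4⁆ = 0 := by simpa [patternL', Fin.sum_univ_five] using hf 3 4 (by decide)
  have h10 : ⁅f 1, f 0⁆ = 0 := by rw [← lie_skew, h01, neg_zero]
  have h20 : ⁅f 2, f 0⁆ = 0 := by rw [← lie_skew, h02, neg_zero]
  have h30 : ⁅f 3, f 0⁆ = 0 := by rw [← lie_skew, h03, neg_zero]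
  have h40 : ⁅f 4, f 0⁆ = -f 1 := by rw [← lie_skew, h04]
  have h21 : ⁅f 2, f 1⁆ = 0 := by rw [← lie_skew, h12, neg_zero]
  have h31 : ⁅f 3, f 1⁆ = 0 := by rw [← lie_skew, h13, neg_zero]
  have h41 : ⁅f 4, f 1⁆ = 0 := by rw [← lie_skew, h14, neg_zero]
  have h32 : ⁅f 3, f 2⁆ = -f 1 := by rw [← lie_skew, h23]
  have h42 : ⁅f 4, f 2⁆ = -(f 0 + f 3) := by rw [← lie_skew, h24]
  have h43 : ⁅f 4, f 3⁆ = 0 := by rw [← lie_skew, h34, neg_zero]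
  let v : Fin 5 → M := ![f 0 + f 3, f 1, f 2 + f 4, f 3, f 4]
  let w : Fin 5 → M := ![f 0 - f 3, f 1, f 2 - f 4, f 3, f 4]
  let A : M →ₗ[ℂ] M := f.constr ℂ v
  let B : M →ₗ[ℂ] M := f.constr ℂ w
  have hAB : A.comp B = LinearMap.id := by
    apply f.ext
    intro i
    fin_cases i <;>
      simp [A, B, v, w, Module.Basis.constr_basis, map_sub, map_add]
  have hBA : B.comp A = LinearMap.id := by
    apply f.ext
    intro i
    fin_cases i <;>
      simp [A, B, v, w, Module.Basis.constr_basis, map_sub, map_add]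
  let φ : M ≃ₗ[ℂ] M := LinearEquiv.ofLinear A B hAB hBA
  refine ⟨f.map φ, ?_⟩
  have hv : ∀ i, (f.map φ) i = v i := by
    intro i
    simp [φ, Module.Basis.map_apply, A, Module.Basis.constr_basis]
  intro i j hij
  fin_cases i <;> fin_cases j <;>
    first
      | exact absurd hij (by decide)
      | (simp [hv, v, patternL'', Fin.sum_univ_five, lie_add, add_lie,
          h01, h02, h03, h04, h12, h13, h14, h23, h24, h34,
          h10, h20, h30, h40, h21, h31, h41, h32, h42, h43] <;> abel)

/-- The three nilpotent 5-dimensional complex Lie algebras `d₅(0:0:0)`,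
`d₁₄(0:0)` and `d₁₅(0:0)` are pairwise isomorphic. -/
theorem d5_d14_d15_generic_iso
    (L L' L'' : Type) [LieRing L] [LieAlgebra ℂ L] [LieRing L'] [LieAlgebra ℂ L']
    [LieRing L''] [LieAlgebra ℂ L'']
    (hL : Realizes L patternL) (hL' : Realizes L' patternL') (hL'' : Realizes L'' patternL'') :
    Nonempty (L ≃ₗ⁅ℂ⁆ L') ∧ Nonempty (L' ≃ₗ⁅ℂ⁆ L'') ∧ Nonempty (L ≃ₗ⁅ℂ⁆ L'') := by
  have r1 : Realizes L' patternL :=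
    realizes_patternL_of_patternL'' (realizes_patternL''_of_patternL' hL')
  have r2 : Realizes L'' patternL := realizes_patternL_of_patternL'' hL''
  exact ⟨hL.lieEquiv r1, r1.lieEquiv r2, hL.lieEquiv r2⟩
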